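/- (Factorization, Lemma 3.2 of LDC) In LDC(N≥): if Γ ⊢ a :^q A and q ≠ 0, then there exists a context Γ' with ⌊Γ'⌋ = ⌊Γ⌋ such that Γ' ⊢ a :^1 A and Γ <: q·Γ'. -/

import Mathlib

/-!
The simply-typed calculus LDC(N≥): graded by the preordered semiring of natural
numbers with the descending order, i.e. the preorder `q <: q'` holds iff `q' ≤ q`.
-/

namespace LDC

/-- Types of LDC(N≥): `Unit`, graded functions `^r A → B`, graded products
`^r A₁ × A₂` and sums `A₁ + A₂`. -/
inductive Ty : Type where
  | unit : Ty
  | arr : ℕ → Ty → Ty → Ty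
  | prod : ℕ → Ty → Ty → Ty
  | sum : Ty → Ty → Ty

/-- Terms of LDC(N≥), with variables named by natural numbers. -/
inductive Tm : Type where
  /-- variable `x` -/
  | var : ℕ → Tm
  /-- `λ^r x:A. b` -/
  | lam : ℕ → ℕ → Ty → Tm → Tm
  /-- application `b a^r` -/
  | app : Tm → Tm → ℕ → Tm
  /-- `unit` -/
  | unit : Tm
  /-- `let_{q₀} unit be a in b` -/
  | letUnit : ℕ → Tm → Tm → Tm
  /-- `(a₁^r, a₂)` -/
  | pair : Tm → ℕ → Tm → Tm
  /-- `let_{q₀} (x^r, y) be a in b` -/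
  | letPair : ℕ → ℕ → ℕ → ℕ → Tm → Tm → Tm
  /-- `inj₁ a` -/
  | inj1 : Tm → Tm
  /-- `inj₂ a` -/
  | inj2 : Tm → Tm
  /-- `case_{q₀} a of x₁.b₁; x₂.b₂` -/
  | case : ℕ → Tm → ℕ → Tm → ℕ → Tm → Tm

/-- Free variables of a term. -/
def fv : Tm → Finset ℕ
  | .var x => {x}
  | .lam _ x _ b => fv b \ {x}
  | .app b a _ => fv b ∪ fv a
  | .unit => ∅
  | .letUnit _ a b => fv a ∪ fv b
  | .pair a _ b => fv a ∪ fv b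
  | .letPair _ x _ y a b => fv a ∪ (fv b \ {x, y})
  | .inj1 a => fv a
  | .inj2 a => fv a
  | .case _ a x₁ b₁ x₂ b₂ => fv a ∪ (fv b₁ \ {x₁}) ∪ (fv b₂ \ {x₂})

/-- Capture-avoiding substitution `a{c/z}` of `c` for the free occurrences of
`z` in `a` (binders shadowing `z` are left untouched). -/
def subst (z : ℕ) (c : Tm) : Tm → Tm
  | .var x => if x = z then c else .var x
  | .lam r x A b => .lam r x A (if x = z then b else subst z c b)
  | .app b a r => .app (subst z c b) (subst z c a) r
  | .unit => .unit
  | .letUnit q a b => .letUnit q (subst z c a) (subst z c b)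
  | .pair a r b => .pair (subst z c a) r (subst z c b)
  | .letPair q x r y a b =>
      .letPair q x r y (subst z c a) (if x = z ∨ y = z then b else subst z c b)
  | .inj1 a => .inj1 (subst z c a)
  | .inj2 a => .inj2 (subst z c a)
  | .case q a x₁ b₁ x₂ b₂ =>
      .case q (subst z c a) x₁ (if x₁ = z then b₁ else subst z c b₁)
        x₂ (if x₂ = z then b₂ else subst z c b₂)

/-- A context is a list of graded assumptions `x :^q A`. -/
abbrev Ctx := List (ℕ × ℕ × Ty)

/-- `⌊Γ⌋`: the underlying ungraded context. -/
def floor (Γ : Ctx) : List (ℕ × Ty) := Γ.map (fun e => (e.1, e.2.2))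

/-- `Γ₁ + Γ₂`: pointwise addition of grades (meaningful when `⌊Γ₁⌋ = ⌊Γ₂⌋`). -/
def ctxAdd (Γ₁ Γ₂ : Ctx) : Ctx :=
  List.zipWith (fun e₁ e₂ => (e₁.1, e₁.2.1 + e₂.2.1, e₁.2.2)) Γ₁ Γ₂

/-- `q·Γ`: multiply every grade of `Γ` by `q`. -/
def ctxSMul (q : ℕ) (Γ : Ctx) : Ctx := Γ.map (fun e => (e.1, q * e.2.1, e.2.2))

/-- The preorder `q <: q'` of N≥, i.e. `q' ≤ q` (descending order). -/
def gradeLe (q q' : ℕ) : Prop := q' ≤ q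

/-- `Γ <: Γ'`: same underlying assumptions, grades pointwise related by `<:`. -/
def ctxLe (Γ Γ' : Ctx) : Prop :=
  List.Forall₂ (fun e e' => e.1 = e'.1 ∧ e.2.2 = e'.2.2 ∧ gradeLe e.2.1 e'.2.1) Γ Γ'

/-- The typing judgment `Γ ⊢ a :^q A` of LDC(N≥). -/
inductive Typing : Ctx → Tm → ℕ → Ty → Prop where
  | var (Γ₁ Γ₂ : Ctx) (x q : ℕ) (A : Ty) :
      Typing (ctxSMul 0 Γ₁ ++ [(x, q, A)] ++ ctxSMul 0 Γ₂) (.var x) q A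
  | lam {Γ : Ctx} {b : Tm} {q : ℕ} {B : Ty} (r x : ℕ) (A : Ty) :
      Typing (Γ ++ [(x, q * r, A)]) b q B →
      Typing Γ (.lam r x A b) q (.arr r A B)
  | app {Γ₁ Γ₂ : Ctx} {b a : Tm} {q r : ℕ} {A B : Ty} :
      Typing Γ₁ b q (.arr r A B) →
      Typing Γ₂ a (q * r) A →
      floor Γ₁ = floor Γ₂ →
      Typing (ctxAdd Γ₁ Γ₂) (.app b a r) q B
  | unit (Γ : Ctx) (q : ℕ) : Typing (ctxSMul 0 Γ) .unit q .unit
  | letUnit {Γ₁ Γ₂ : Ctx} {a b : Tm} {q q₀ : ℕ} {B : Ty} :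
      Typing Γ₁ a (q * q₀) .unit →
      Typing Γ₂ b q B →
      gradeLe q₀ 1 →
      floor Γ₁ = floor Γ₂ →
      Typing (ctxAdd Γ₁ Γ₂) (.letUnit q₀ a b) q B
  | pair {Γ₁ Γ₂ : Ctx} {a₁ a₂ : Tm} {q r : ℕ} {A₁ A₂ : Ty} :
      Typing Γ₁ a₁ (q * r) A₁ →
      Typing Γ₂ a₂ q A₂ →
      floor Γ₁ = floor Γ₂ →
      Typing (ctxAdd Γ₁ Γ₂) (.pair a₁ r a₂) q (.prod r A₁ A₂)
  | letPair {Γ₁ Γ₂ : Ctx} {a b : Tm} {q q₀ r x y : ℕ} {A₁ A₂ B : Ty} :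
      Typing Γ₁ a (q * q₀) (.prod r A₁ A₂) →
      Typing (Γ₂ ++ [(x, q * q₀ * r, A₁), (y, q * q₀, A₂)]) b q B →
      gradeLe q₀ 1 →
      floor Γ₁ = floor Γ₂ →
      Typing (ctxAdd Γ₁ Γ₂) (.letPair q₀ x r y a b) q B
  | inj1 {Γ : Ctx} {a₁ : Tm} {q : ℕ} {A₁ : Ty} (A₂ : Ty) :
      Typing Γ a₁ q A₁ → Typing Γ (.inj1 a₁) q (.sum A₁ A₂)
  | inj2 {Γ : Ctx} {a₂ : Tm} {q : ℕ} {A₂ : Ty} (A₁ : Ty) :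
      Typing Γ a₂ q A₂ → Typing Γ (.inj2 a₂) q (.sum A₁ A₂)
  | case {Γ₁ Γ₂ : Ctx} {a b₁ b₂ : Tm} {q q₀ x₁ x₂ : ℕ} {A₁ A₂ B : Ty} :
      Typing Γ₁ a (q * q₀) (.sum A₁ A₂) →
      Typing (Γ₂ ++ [(x₁, q * q₀, A₁)]) b₁ q B →
      Typing (Γ₂ ++ [(x₂, q * q₀, A₂)]) b₂ q B →
      gradeLe q₀ 1 →
      floor Γ₁ = floor Γ₂ →
      Typing (ctxAdd Γ₁ Γ₂) (.case q₀ a x₁ b₁ x₂ b₂) q B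
  | subL {Γ Γ' : Ctx} {a : Tm} {q : ℕ} {A : Ty} :
      Typing Γ' a q A → ctxLe Γ Γ' → Typing Γ a q A
  | subR {Γ : Ctx} {a : Tm} {q q' : ℕ} {A : Ty} :
      Typing Γ a q A → gradeLe q q' → Typing Γ a q' A

/-- Values: λ-abstractions, `unit`, pairs and injections. -/
def IsValue : Tm → Prop
  | .lam _ _ _ _ => True
  | .unit => True
  | .pair _ _ _ => True
  | .inj1 _ => True
  | .inj2 _ => True
  | _ => False

/-- Call-by-name small-step reduction `⊢ a ⇝ a'`. -/
inductive Step : Tm → Tm → Prop where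
  | appBeta (r x : ℕ) (A : Ty) (b a : Tm) :
      Step (.app (.lam r x A b) a r) (subst x a b)
  | letUnitBeta (q₀ : ℕ) (b : Tm) :
      Step (.letUnit q₀ .unit b) b
  | letPairBeta (q₀ x r y : ℕ) (a₁ a₂ b : Tm) :
      Step (.letPair q₀ x r y (.pair a₁ r a₂) b) (subst y a₂ (subst x a₁ b))
  | caseBeta1 (q₀ : ℕ) (a₁ : Tm) (x₁ : ℕ) (b₁ : Tm) (x₂ : ℕ) (b₂ : Tm) :
      Step (.case q₀ (.inj1 a₁) x₁ b₁ x₂ b₂) (subst x₁ a₁ b₁)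
  | caseBeta2 (q₀ : ℕ) (a₂ : Tm) (x₁ : ℕ) (b₁ : Tm) (x₂ : ℕ) (b₂ : Tm) :
      Step (.case q₀ (.inj2 a₂) x₁ b₁ x₂ b₂) (subst x₂ a₂ b₂)
  | appCong {b b' : Tm} (a : Tm) (r : ℕ) :
      Step b b' → Step (.app b a r) (.app b' a r)
  | letUnitCong {a a' : Tm} (q₀ : ℕ) (b : Tm) :
      Step a a' → Step (.letUnit q₀ a b) (.letUnit q₀ a' b)
  | letPairCong {a a' : Tm} (q₀ x r y : ℕ) (b : Tm) :
      Step a a' → Step (.letPair q₀ x r y a b) (.letPair q₀ x r y a' b)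
  | caseCong {a a' : Tm} (q₀ x₁ : ℕ) (b₁ : Tm) (x₂ : ℕ) (b₂ : Tm) :
      Step a a' → Step (.case q₀ a x₁ b₁ x₂ b₂) (.case q₀ a' x₁ b₁ x₂ b₂)

/-- A heap is a list of weighted bindings `x ↦^q a`. -/
abbrev Heap := List (ℕ × ℕ × Tm)

/-- The set of variables bound in a heap. -/
def heapDom (H : Heap) : Finset ℕ := (H.map Prod.fst).toFinset

/-- The heap reduction judgment `[H] a ⟹^q_S [H'] a'` of LDC(N≥). -/
inductive HeapStep : Heap → Tm → ℕ → Finset ℕ → Heap → Tm → Prop where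
  | var {H₁ H₂ : Heap} {x r q : ℕ} {a : Tm} {S : Finset ℕ} :
      q ≠ 0 →
      HeapStep (H₁ ++ [(x, r + q, a)] ++ H₂) (.var x) q S (H₁ ++ [(x, r, a)] ++ H₂) a
  | discard {H H' : Heap} {a a' : Tm} {q q' : ℕ} {S : Finset ℕ} :
      HeapStep H a q S H' a' → gradeLe q q' → HeapStep H a q' S H' a'
  | appCong {H H' : Heap} {b b' : Tm} {q : ℕ} {S : Finset ℕ} (a : Tm) (r : ℕ) :
      HeapStep H b q (S ∪ fv a) H' b' →
      HeapStep H (.app b a r) q S H' (.app b' a r)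
  | letUnitCong {H H' : Heap} {a a' : Tm} {q : ℕ} {S : Finset ℕ} (q₀ : ℕ) (b : Tm) :
      HeapStep H a q (S ∪ fv b) H' a' →
      HeapStep H (.letUnit q₀ a b) q S H' (.letUnit q₀ a' b)
  | letPairCong {H H' : Heap} {a a' : Tm} {q : ℕ} {S : Finset ℕ} (q₀ x r y : ℕ) (b : Tm) :
      HeapStep H a q (S ∪ fv b) H' a' →
      HeapStep H (.letPair q₀ x r y a b) q S H' (.letPair q₀ x r y a' b)
  | caseCong {H H' : Heap} {a a' : Tm} {q : ℕ} {S : Finset ℕ} (q₀ x₁ : ℕ) (b₁ : Tm) (x₂ : ℕ) (b₂ : Tm) :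
      HeapStep H a q (S ∪ fv b₁ ∪ fv b₂) H' a' →
      HeapStep H (.case q₀ a x₁ b₁ x₂ b₂) q S H' (.case q₀ a' x₁ b₁ x₂ b₂)
  | appBeta {H : Heap} {S : Finset ℕ} (r x : ℕ) (A : Ty) (b a : Tm) (q : ℕ) {x' : ℕ} :
      x' ∉ S → x' ∉ heapDom H →
      HeapStep H (.app (.lam r x A b) a r) q S
        (H ++ [(x', q * r, a)]) (subst x (.var x') b)
  | letUnitBeta {H : Heap} {S : Finset ℕ} (q₀ : ℕ) (b : Tm) (q : ℕ) :
      HeapStep H (.letUnit q₀ .unit b) q S H b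
  | letPairBeta {H : Heap} {S : Finset ℕ} (q₀ x r y : ℕ) (a₁ a₂ b : Tm) (q : ℕ) {x' y' : ℕ} :
      x' ∉ S → x' ∉ heapDom H → y' ∉ S → y' ∉ heapDom H → x' ≠ y' →
      HeapStep H (.letPair q₀ x r y (.pair a₁ r a₂) b) q S
        (H ++ [(x', q * q₀ * r, a₁), (y', q * q₀, a₂)])
        (subst y (.var y') (subst x (.var x') b))
  | caseBeta1 {H : Heap} {S : Finset ℕ} (q₀ : ℕ) (a₁ : Tm) (x₁ : ℕ) (b₁ : Tm) (x₂ : ℕ) (b₂ : Tm) (q : ℕ) {x' : ℕ} :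
      x' ∉ S → x' ∉ heapDom H →
      HeapStep H (.case q₀ (.inj1 a₁) x₁ b₁ x₂ b₂) q S
        (H ++ [(x', q * q₀, a₁)]) (subst x₁ (.var x') b₁)
  | caseBeta2 {H : Heap} {S : Finset ℕ} (q₀ : ℕ) (a₂ : Tm) (x₁ : ℕ) (b₁ : Tm) (x₂ : ℕ) (b₂ : Tm) (q : ℕ) {x' : ℕ} :
      x' ∉ S → x' ∉ heapDom H →
      HeapStep H (.case q₀ (.inj2 a₂) x₁ b₁ x₂ b₂) q S
        (H ++ [(x', q * q₀, a₂)]) (subst x₂ (.var x') b₂)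

/-- The compatibility judgment `H ⊨ Γ` between heaps and contexts. -/
inductive Compat : Heap → Ctx → Prop where
  | nil : Compat [] []
  | cons {H : Heap} {Γ Γ₀ : Ctx} {x q : ℕ} {a : Tm} {A : Ty} :
      floor Γ₀ = floor Γ →
      Typing Γ₀ a q A →
      Compat H (ctxAdd Γ Γ₀) →
      Compat (H ++ [(x, q, a)]) (Γ ++ [(x, q, A)])

/-- `n` successive heap reduction steps at grade `q`, where at each step the
support set is the domain of the current heap together with the free
variables of the current term. -/
inductive HeapSteps : Heap → Tm → ℕ → ℕ → Heap → Tm → Prop where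
  | refl (H : Heap) (a : Tm) (q : ℕ) : HeapSteps H a q 0 H a
  | step {H H' H'' : Heap} {a a' a'' : Tm} {q n : ℕ} :
      HeapStep H a q (heapDom H ∪ fv a) H' a' →
      HeapSteps H' a' q n H'' a'' →
      HeapSteps H a q (n + 1) H'' a''

/-! ### Auxiliary material for the factorization lemma -/

section Fact

open List

/-- `Rel q e d` : the entries `e` and `d` have the same variable and type,
and `q` times the grade of `d` is below the grade of `e`. -/
def Rel (q : ℕ) (e d : ℕ × ℕ × Ty) : Prop :=
  e.1 = d.1 ∧ e.2.2 = d.2.2 ∧ q * d.2.1 ≤ e.2.1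

theorem rel_floor {q : ℕ} : ∀ {Γ Δ : Ctx}, List.Forall₂ (Rel q) Γ Δ →
    floor Δ = floor Γ := by
  intro Γ Δ h
  induction h with
  | nil => rfl
  | cons h _ ih =>
    simp only [floor, List.map_cons] at *
    exact by rw [ih, h.1, h.2.1]

theorem floor_smul (s : ℕ) (Γ : Ctx) : floor (ctxSMul s Γ) = floor Γ := by
  simp [floor, ctxSMul, List.map_map, Function.comp]

theorem smul_append (s : ℕ) (Γ₁ Γ₂ : Ctx) :
    ctxSMul s (Γ₁ ++ Γ₂) = ctxSMul s Γ₁ ++ ctxSMul s Γ₂ :=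
  List.map_append

theorem smul_smul_zero (s : ℕ) (Γ : Ctx) :
    ctxSMul s (ctxSMul 0 Γ) = ctxSMul 0 Γ := by
  simp [ctxSMul, List.map_map, Function.comp]

theorem smul_add (s : ℕ) (Γ₁ Γ₂ : Ctx) :
    ctxSMul s (ctxAdd Γ₁ Γ₂) = ctxAdd (ctxSMul s Γ₁) (ctxSMul s Γ₂) := by
  simp [ctxSMul, ctxAdd, List.map_zipWith, List.zipWith_map, Nat.mul_add]

theorem ctxLe_refl (Γ : Ctx) : ctxLe Γ Γ :=
  List.forall₂_same.2 fun _ _ => ⟨rfl, rfl, le_refl _⟩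

theorem ctxLe_smul {Γ Γ' : Ctx} (h : ctxLe Γ Γ') (s : ℕ) :
    ctxLe (ctxSMul s Γ) (ctxSMul s Γ') := by
  induction h with
  | nil => exact List.Forall₂.nil
  | cons h _ ih =>
    exact List.Forall₂.cons ⟨h.1, h.2.1, mul_le_mul_right h.2.2 s⟩ ih

/-- Multiplication (scaling) lemma: grades can be multiplied throughout. -/
theorem scale {Γ : Ctx} {a : Tm} {q : ℕ} {A : Ty} (h : Typing Γ a q A) (s : ℕ) :
    Typing (ctxSMul s Γ) a (s * q) A := by
  induction h with
  | var Γ₁ Γ₂ x q A =>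
    simpa [smul_append, smul_smul_zero, ctxSMul, Function.comp_def] using Typing.var Γ₁ Γ₂ x (s * q) A
  | lam r x A _ ih =>
    exact Typing.lam r x A (by simpa [smul_append, ctxSMul, Nat.mul_assoc] using ih)
  | app h1 h2 hf ih1 ih2 =>
    rw [smul_add]
    exact Typing.app ih1 (by simpa [Nat.mul_assoc] using ih2)
      (by simp [floor_smul, hf])
  | unit Γ q => simpa [smul_smul_zero] using Typing.unit Γ (s * q)
  | letUnit h1 h2 h0 hf ih1 ih2 =>
    rw [smul_add]
    exact Typing.letUnit (by simpa [Nat.mul_assoc] using ih1) ih2 h0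
      (by simp [floor_smul, hf])
  | pair h1 h2 hf ih1 ih2 =>
    rw [smul_add]
    exact Typing.pair (by simpa [Nat.mul_assoc] using ih1) ih2
      (by simp [floor_smul, hf])
  | letPair h1 h2 h0 hf ih1 ih2 =>
    rw [smul_add]
    exact Typing.letPair (by simpa [Nat.mul_assoc] using ih1)
      (by simpa [smul_append, ctxSMul, Nat.mul_assoc] using ih2) h0
      (by simp [floor_smul, hf])
  | inj1 A₂ _ ih => exact Typing.inj1 A₂ ih
  | inj2 A₁ _ ih => exact Typing.inj2 A₁ ih
  | case h1 hb1 hb2 h0 hf ih ihb1 ihb2 =>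
    rw [smul_add]
    exact Typing.case (by simpa [Nat.mul_assoc] using ih)
      (by simpa [smul_append, ctxSMul, Nat.mul_assoc] using ihb1)
      (by simpa [smul_append, ctxSMul, Nat.mul_assoc] using ihb2) h0
      (by simp [floor_smul, hf])
  | subL _ hle ih => exact Typing.subL ih (ctxLe_smul hle s)
  | subR _ hle ih => exact Typing.subR ih (mul_le_mul_right hle s)

theorem rel_ctxAdd {q : ℕ} : ∀ {Γ₁ Δ₁ Γ₂ Δ₂ : Ctx},
    List.Forall₂ (Rel q) Γ₁ Δ₁ → List.Forall₂ (Rel q) Γ₂ Δ₂ →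
    List.Forall₂ (Rel q) (ctxAdd Γ₁ Γ₂) (ctxAdd Δ₁ Δ₂) := by
  intro Γ₁ Δ₁ Γ₂ Δ₂ h1
  induction h1 generalizing Γ₂ Δ₂ with
  | nil => intro _; exact List.Forall₂.nil
  | cons h _ ih =>
    intro h2
    cases h2 with
    | nil => exact List.Forall₂.nil
    | cons h' t' =>
      refine List.Forall₂.cons ⟨h.1, h.2.1, ?_⟩ (ih t')
      rw [Nat.mul_add]
      exact Nat.add_le_add h.2.2 h'.2.2

theorem rel_zero {q : ℕ} (Γ : Ctx) : List.Forall₂ (Rel q) Γ (ctxSMul 0 Γ) := by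
  rw [ctxSMul, List.forall₂_map_right_iff]
  exact List.forall₂_same.2 fun e _ => ⟨rfl, rfl, by simp⟩

theorem rel_zero' {q : ℕ} (Γ : Ctx) :
    List.Forall₂ (Rel q) (ctxSMul 0 Γ) (ctxSMul 0 Γ) := by
  refine List.forall₂_same.2 fun e he => ⟨rfl, rfl, ?_⟩
  obtain ⟨d, _, rfl⟩ := List.mem_map.1 he
  simp

theorem rel_smul_right {q r : ℕ} {Γ Δ : Ctx}
    (h : List.Forall₂ (Rel (q * r)) Γ Δ) :
    List.Forall₂ (Rel q) Γ (ctxSMul r Δ) := by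
  rw [ctxSMul, List.forall₂_map_right_iff]
  exact h.imp fun _ _ hab => ⟨hab.1, hab.2.1, by rw [← Nat.mul_assoc]; exact hab.2.2⟩

theorem rel_mono {q q' : ℕ} {Γ Δ : Ctx} (hq : q' ≤ q)
    (h : List.Forall₂ (Rel q) Γ Δ) : List.Forall₂ (Rel q') Γ Δ :=
  h.imp fun _ _ hab => ⟨hab.1, hab.2.1, le_trans (Nat.mul_le_mul hq (le_refl _)) hab.2.2⟩

theorem rel_of_ctxLe {q : ℕ} : ∀ {Γ Γ' Δ : Ctx}, ctxLe Γ Γ' →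
    List.Forall₂ (Rel q) Γ' Δ → List.Forall₂ (Rel q) Γ Δ := by
  intro Γ Γ' Δ h1
  induction h1 generalizing Δ with
  | nil => intro h2; cases h2; exact List.Forall₂.nil
  | cons h _ ih =>
    intro h2
    cases h2 with
    | cons h' t' =>
      exact List.Forall₂.cons
        ⟨(h.1).trans h'.1, h.2.1.trans h'.2.1,
          le_trans h'.2.2 h.2.2⟩ (ih t')

theorem rel_split {q : ℕ} : ∀ {Γ es Δ : Ctx},
    List.Forall₂ (Rel q) (Γ ++ es) Δ →
    ∃ Δ₀ ds : Ctx, Δ = Δ₀ ++ ds ∧ List.Forall₂ (Rel q) Γ Δ₀ ∧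
      List.Forall₂ (Rel q) es ds := by
  intro Γ
  induction Γ with
  | nil => intro es Δ h; exact ⟨[], Δ, rfl, List.Forall₂.nil, h⟩
  | cons e Γ ih =>
    intro es Δ h
    cases h with
    | cons h' t =>
      obtain ⟨Δ₀, ds, rfl, h1, h2⟩ := ih t
      exact ⟨_ :: Δ₀, ds, rfl, List.Forall₂.cons h' h1, h2⟩

theorem mul_max_le {q x y g : ℕ} (hx : q * x ≤ g) (hy : q * y ≤ g) :
    q * max x y ≤ g := by
  rcases Nat.le_total x y with h | h
  · rw [Nat.max_eq_right h]; exact hy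
  · rw [Nat.max_eq_left h]; exact hx

/-- Pointwise max of grades. -/
def ctxMax (Γ₁ Γ₂ : Ctx) : Ctx :=
  List.zipWith (fun e₁ e₂ => (e₁.1, max e₁.2.1 e₂.2.1, e₁.2.2)) Γ₁ Γ₂

theorem rel_max {q : ℕ} : ∀ {Γ Δa Δb : Ctx},
    List.Forall₂ (Rel q) Γ Δa → List.Forall₂ (Rel q) Γ Δb →
    ctxLe (ctxMax Δa Δb) Δa ∧ ctxLe (ctxMax Δa Δb) Δb ∧
      List.Forall₂ (Rel q) Γ (ctxMax Δa Δb) := by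
  intro Γ Δa Δb h1
  induction h1 generalizing Δb with
  | nil =>
    intro h2; cases h2
    exact ⟨List.Forall₂.nil, List.Forall₂.nil, List.Forall₂.nil⟩
  | cons h t ih =>
    intro h2
    cases h2 with
    | cons h' t' =>
      obtain ⟨l1, l2, l3⟩ := ih t'
      refine ⟨List.Forall₂.cons ⟨rfl, rfl, le_max_left _ _⟩ l1,
        List.Forall₂.cons ⟨h.1.symm.trans h'.1,
          h.2.1.symm.trans h'.2.1, le_max_right _ _⟩ l2,
        List.Forall₂.cons ⟨h.1, h.2.1, mul_max_le h.2.2 h'.2.2⟩ l3⟩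

theorem fact {Γ : Ctx} {a : Tm} {q : ℕ} {A : Ty} (h : Typing Γ a q A) :
    q ≠ 0 → ∃ Δ : Ctx, Typing Δ a 1 A ∧ List.Forall₂ (Rel q) Γ Δ := by
  induction h with
  | var Γ₁ Γ₂ x q A =>
    intro _
    refine ⟨ctxSMul 0 Γ₁ ++ [(x, 1, A)] ++ ctxSMul 0 Γ₂, Typing.var Γ₁ Γ₂ x 1 A, ?_⟩
    have hsing : List.Forall₂ (Rel q) [(x, q, A)] [(x, 1, A)] :=
      List.Forall₂.cons ⟨rfl, rfl, by simp⟩ List.Forall₂.nil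
    exact List.rel_append (List.rel_append (rel_zero' Γ₁) hsing) (rel_zero' Γ₂)
  | @lam Γ b q B r x A _ ih =>
    intro hq
    obtain ⟨Δ, t, hrel⟩ := ih hq
    obtain ⟨Δ₀, ds, rfl, h1, h2⟩ := rel_split hrel
    cases h2 with
    | cons hd hnil =>
      cases hnil
      rename_i d
      obtain ⟨d1, d2, d3⟩ := d
      obtain ⟨he1, he2, he3⟩ := hd
      cases he1; cases he2
      have hd2 : d2 ≤ r := Nat.le_of_mul_le_mul_left he3 (Nat.pos_of_ne_zero hq)
      refine ⟨Δ₀, Typing.lam r x A (Typing.subL t ?_), h1⟩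
      exact List.rel_append (ctxLe_refl Δ₀)
        (List.Forall₂.cons ⟨rfl, rfl, by simpa [gradeLe] using hd2⟩ List.Forall₂.nil)
  | @app Γ₁ Γ₂ b a q r A B h1 h2 hf ih1 ih2 =>
    intro hq
    obtain ⟨Δ₁, t1, r1⟩ := ih1 hq
    by_cases hr : r = 0
    · subst hr
      refine ⟨ctxAdd Δ₁ (ctxSMul 0 Γ₂),
        Typing.app t1 (by simpa using scale h2 0) ?_, rel_ctxAdd r1 (rel_zero Γ₂)⟩
      rw [floor_smul, rel_floor r1]; exact hf
    · obtain ⟨Δ₂, t2, r2⟩ := ih2 (Nat.mul_ne_zero hq hr)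
      refine ⟨ctxAdd Δ₁ (ctxSMul r Δ₂),
        Typing.app t1 (by simpa using scale t2 r) ?_, rel_ctxAdd r1 (rel_smul_right r2)⟩
      rw [floor_smul, rel_floor r1, rel_floor r2]; exact hf
  | unit Γ q =>
    intro _
    exact ⟨ctxSMul 0 Γ, Typing.unit Γ 1, rel_zero' Γ⟩
  | @letUnit Γ₁ Γ₂ a b q q₀ B h1 h2 h0 hf ih1 ih2 =>
    intro hq
    have hq0 : q₀ ≠ 0 := by
      have : (1 : ℕ) ≤ q₀ := h0
      omega
    obtain ⟨Δ₁, t1, r1⟩ := ih1 (Nat.mul_ne_zero hq hq0)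
    obtain ⟨Δ₂, t2, r2⟩ := ih2 hq
    refine ⟨ctxAdd (ctxSMul q₀ Δ₁) Δ₂,
      Typing.letUnit (by simpa using scale t1 q₀) t2 h0 ?_,
      rel_ctxAdd (rel_smul_right r1) r2⟩
    rw [floor_smul, rel_floor r1, rel_floor r2]; exact hf
  | @pair Γ₁ Γ₂ a₁ a₂ q r A₁ A₂ h1 h2 hf ih1 ih2 =>
    intro hq
    obtain ⟨Δ₂, t2, r2⟩ := ih2 hq
    by_cases hr : r = 0
    · subst hr
      refine ⟨ctxAdd (ctxSMul 0 Γ₁) Δ₂,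
        Typing.pair (by simpa using scale h1 0) t2 ?_, rel_ctxAdd (rel_zero Γ₁) r2⟩
      rw [floor_smul, rel_floor r2]; exact hf
    · obtain ⟨Δ₁, t1, r1⟩ := ih1 (Nat.mul_ne_zero hq hr)
      refine ⟨ctxAdd (ctxSMul r Δ₁) Δ₂,
        Typing.pair (by simpa using scale t1 r) t2 ?_,
        rel_ctxAdd (rel_smul_right r1) r2⟩
      rw [floor_smul, rel_floor r1, rel_floor r2]; exact hf
  | @letPair Γ₁ Γ₂ a b q q₀ r x y A₁ A₂ B h1 h2 h0 hf ih1 ih2 =>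
    intro hq
    have hq0 : q₀ ≠ 0 := by
      have : (1 : ℕ) ≤ q₀ := h0
      omega
    obtain ⟨Δ₁, t1, r1⟩ := ih1 (Nat.mul_ne_zero hq hq0)
    obtain ⟨Δ, t2, hrel⟩ := ih2 hq
    obtain ⟨Δ₀, ds, rfl, ha, hb⟩ := rel_split hrel
    cases hb with
    | cons hd1 hb' =>
      cases hb' with
      | cons hd2 hnil =>
        cases hnil
        rename_i d1 d2
        obtain ⟨d11, d12, d13⟩ := d1
        obtain ⟨d21, d22, d23⟩ := d2
        obtain ⟨he1, he2, he3⟩ := hd1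
        obtain ⟨hg1, hg2, hg3⟩ := hd2
        cases he1; cases he2; cases hg1; cases hg2
        have hd12 : d12 ≤ q₀ * r := by
          refine Nat.le_of_mul_le_mul_left ?_ (Nat.pos_of_ne_zero hq)
          rw [← Nat.mul_assoc]; exact he3
        have hd22 : d22 ≤ q₀ := Nat.le_of_mul_le_mul_left hg3 (Nat.pos_of_ne_zero hq)
        refine ⟨ctxAdd (ctxSMul q₀ Δ₁) Δ₀,
          Typing.letPair (by simpa using scale t1 q₀) (Typing.subL t2 ?_) h0 ?_,
          rel_ctxAdd (rel_smul_right r1) ha⟩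
        · exact List.rel_append (ctxLe_refl Δ₀)
            (List.Forall₂.cons ⟨rfl, rfl, by simpa [gradeLe] using hd12⟩
              (List.Forall₂.cons ⟨rfl, rfl, by simpa [gradeLe] using hd22⟩ List.Forall₂.nil))
        · rw [floor_smul, rel_floor r1, rel_floor ha]; exact hf
  | inj1 A₂ _ ih =>
    intro hq
    obtain ⟨Δ, t, r⟩ := ih hq
    exact ⟨Δ, Typing.inj1 A₂ t, r⟩
  | inj2 A₁ _ ih =>
    intro hq
    obtain ⟨Δ, t, r⟩ := ih hq
    exact ⟨Δ, Typing.inj2 A₁ t, r⟩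
  | @case Γ₁ Γ₂ a b₁ b₂ q q₀ x₁ x₂ A₁ A₂ B h1 hb1 hb2 h0 hf ih ihb1 ihb2 =>
    intro hq
    have hq0 : q₀ ≠ 0 := by
      have : (1 : ℕ) ≤ q₀ := h0
      omega
    obtain ⟨Δ₁, t1, r1⟩ := ih (Nat.mul_ne_zero hq hq0)
    obtain ⟨Δa, ta, hrela⟩ := ihb1 hq
    obtain ⟨Δb, tb, hrelb⟩ := ihb2 hq
    obtain ⟨Δa₀, dsa, rfl, ha, ha'⟩ := rel_split hrela
    obtain ⟨Δb₀, dsb, rfl, hbq, hb'⟩ := rel_split hrelb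
    cases ha' with
    | cons hda hnila =>
      cases hnila
      cases hb' with
      | cons hdb hnilb =>
        cases hnilb
        rename_i da db
        obtain ⟨da1, da2, da3⟩ := da
        obtain ⟨db1, db2, db3⟩ := db
        obtain ⟨hea1, hea2, hea3⟩ := hda
        obtain ⟨heb1, heb2, heb3⟩ := hdb
        cases hea1; cases hea2; cases heb1; cases heb2
        have hda2 : da2 ≤ q₀ := Nat.le_of_mul_le_mul_left hea3 (Nat.pos_of_ne_zero hq)
        have hdb2 : db2 ≤ q₀ := Nat.le_of_mul_le_mul_left heb3 (Nat.pos_of_ne_zero hq)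
        obtain ⟨l1, l2, l3⟩ := rel_max ha hbq
        refine ⟨ctxAdd (ctxSMul q₀ Δ₁) (ctxMax Δa₀ Δb₀),
          Typing.case (by simpa using scale t1 q₀)
            (Typing.subL ta ?_) (Typing.subL tb ?_) h0 ?_,
          rel_ctxAdd (rel_smul_right r1) l3⟩
        · exact List.rel_append l1
            (List.Forall₂.cons ⟨rfl, rfl, by simpa [gradeLe] using hda2⟩ List.Forall₂.nil)
        · exact List.rel_append l2
            (List.Forall₂.cons ⟨rfl, rfl, by simpa [gradeLe] using hdb2⟩ List.Forall₂.nil)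
        · rw [floor_smul, rel_floor r1, rel_floor l3]; exact hf
  | subL _ hle ih =>
    intro hq
    obtain ⟨Δ, t, r⟩ := ih hq
    exact ⟨Δ, t, rel_of_ctxLe hle r⟩
  | @subR Γ a q q' A _ hle ih =>
    intro hq'
    have hq : q ≠ 0 := by
      have : q' ≤ q := hle
      omega
    obtain ⟨Δ, t, r⟩ := ih hq
    exact ⟨Δ, t, rel_mono hle r⟩

end Fact

end LDC

/-- **Factorization (Lemma 3.2 of LDC).** In LDC(N≥): if `Γ ⊢ a :^q A` and
`q ≠ 0`, then there exists a context `Γ'` with `⌊Γ'⌋ = ⌊Γ⌋` such that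
`Γ' ⊢ a :^1 A` and `Γ <: q·Γ'`. -/
theorem LDC.factorization {Γ : LDC.Ctx} {a : LDC.Tm} {q : ℕ} {A : LDC.Ty}
    (h : LDC.Typing Γ a q A) (hq : q ≠ 0) :
    ∃ Γ' : LDC.Ctx, LDC.floor Γ' = LDC.floor Γ ∧
      LDC.Typing Γ' a 1 A ∧ LDC.ctxLe Γ (LDC.ctxSMul q Γ') := by
  obtain ⟨Δ, t, r⟩ := LDC.fact h hq
  refine ⟨Δ, LDC.rel_floor r, t, ?_⟩
  show List.Forall₂ _ Γ (List.map _ Δ)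
  rw [List.forall₂_map_right_iff]
  exact r.imp fun _ _ hab => ⟨hab.1, hab.2.1, hab.2.2⟩
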